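/- arXiv:1206.6027 — 2 statements merged into one kernel-verified Lean document; each statement's English description precedes it below -/
import Mathlib

section
/- Let I be any two-sided ideal of F, set I' = θ^{-1}(η(I)) ⊆ P (an ℕ-ideal of P containing E = ker θ), and let J = ⟨ῑ(f^*) : f ∈ I, f ≠ 0⟩_ℕ + D ⊆ P̄ be the extended letterplace analogue of I. Then Sat(J) = (I')^*, the multihomogenization of I'. -/
noncomputable section

/-! ### Common definitions for the letterplace correspondence (La Scala)

`FA K Y` is the free associative algebra `K⟨Y⟩` (monoid algebra of the free monoid on `Y`);
`PL K Y` is the letterplace polynomial algebra `K[y(j) : y ∈ Y, j ∈ ℕ*]`.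
The algebra `F̄ = K⟨X ∪ {t}⟩` is modeled as `FA K (Option X)` with `t = none`,
and similarly `P̄ = PL K (Option X)`. -/

/-- The free associative algebra `K⟨Y⟩`. -/
abbrev FA (K : Type*) [CommSemiring K] (Y : Type*) := MonoidAlgebra K (FreeMonoid Y)

/-- The letterplace polynomial algebra `K[y(j)]`, with places in `ℕ* = ℕ+`. -/
abbrev PL (K : Type*) [CommSemiring K] (Y : Type*) := MvPolynomial (Y × ℕ+) K

variable (K : Type*) [Field K]

/-- The generator of `K⟨Y⟩` corresponding to a letter. -/
def gen {Y : Type*} (y : Y) : FA K Y := MonoidAlgebra.of K (FreeMonoid Y) (FreeMonoid.of y)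

/-- The extra letter `t` of `F̄ = K⟨X ∪ {t}⟩`. -/
def tv {X : Type*} : FA K (Option X) := gen K (none : Option X)

/-- `φ : F̄ → F̄`, the algebra endomorphism with `φ(x_i) = x_i`, `φ(t) = 1`. -/
def phi {X : Type*} : FA K (Option X) →ₐ[K] FA K (Option X) :=
  (MonoidAlgebra.lift K (FA K (Option X)) (FreeMonoid (Option X)))
    (FreeMonoid.lift fun o => Option.elim o 1 (fun x => gen K (some x)))

/-- `f` is homogeneous of degree `d` (all words in its support have length `d`). -/
def IsHomog {Y : Type*} (d : ℕ) (f : FA K Y) : Prop :=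
  ∀ w ∈ f.coeff.support, FreeMonoid.length w = d

/-- The homogeneous component of degree `d` of `f ∈ K⟨Y⟩`. -/
def homComp {Y : Type*} (d : ℕ) (f : FA K Y) : FA K Y :=
  ∑ w ∈ f.coeff.support.filter (fun w => FreeMonoid.length w = d), MonoidAlgebra.single w (f.coeff w)

/-- A two-sided ideal is graded (for the grading by total degree) iff it contains all
homogeneous components of its elements. -/
def IsGradedF {Y : Type*} (I : TwoSidedIdeal (FA K Y)) : Prop := ∀ f ∈ I, ∀ d, homComp K d f ∈ I

/-- `C ⊆ F̄`: the two-sided ideal generated by all homogeneous elements of `ker φ`,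
i.e. the largest graded ideal contained in `ker φ`. -/
def Cideal {X : Type*} : TwoSidedIdeal (FA K (Option X)) :=
  TwoSidedIdeal.span {f | (∃ d, IsHomog K d f) ∧ phi K f = 0}

/-- The embedding of free monoids `X* → (X ∪ {t})*`. -/
def embWord {X : Type*} : FreeMonoid X →* FreeMonoid (Option X) := FreeMonoid.map some

/-- The canonical embedding `F = K⟨X⟩ → F̄ = K⟨X ∪ {t}⟩`. -/
def emb {X : Type*} : FA K X →ₐ[K] FA K (Option X) :=
  (MonoidAlgebra.lift K (FA K (Option X)) (FreeMonoid X))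
    ((MonoidAlgebra.of K (FreeMonoid (Option X))).comp embWord)

/-- The top degree `deg(f)` of `f` (max length of a word in the support). -/
def degF {Y : Type*} (f : FA K Y) : ℕ := f.coeff.support.sup FreeMonoid.length

/-- The homogenization `f^* = Σ_k f_k t^{deg f − k} ∈ F̄` of `f ∈ F`. -/
def hstar {X : Type*} (f : FA K X) : FA K (Option X) :=
  ∑ w ∈ f.coeff.support,
    MonoidAlgebra.single
      (embWord w * (FreeMonoid.of (none : Option X)) ^ (degF K f - FreeMonoid.length w)) (f.coeff w)

/-- Homogenization of an element already written in `F̄` (used for elements of `φ(F̄) = F`). -/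
def hstarO {X : Type*} (f : FA K (Option X)) : FA K (Option X) :=
  ∑ w ∈ f.coeff.support,
    MonoidAlgebra.single
      (w * (FreeMonoid.of (none : Option X)) ^ (degF K f - FreeMonoid.length w)) (f.coeff w)

/-- The homogenization `I^*` of an ideal `I ⊆ F`: the two-sided ideal of `F̄` generated by all
homogeneous elements of `φ⁻¹(I)` (identifying `F` with its image in `F̄`). -/
def hstarIdeal {X : Type*} (I : TwoSidedIdeal (FA K X)) : TwoSidedIdeal (FA K (Option X)) :=
  TwoSidedIdeal.span {g | (∃ d, IsHomog K d g) ∧ ∃ f ∈ I, phi K g = emb K f}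

/-- The saturation `Sat(J) = φ(J)^*` of a graded ideal `C ⊆ J ⊆ F̄`: the two-sided ideal
generated by all homogeneous elements `g` with `φ(g) ∈ φ(J)`. -/
def SatF {X : Type*} (J : TwoSidedIdeal (FA K (Option X))) : TwoSidedIdeal (FA K (Option X)) :=
  TwoSidedIdeal.span {g | (∃ d, IsHomog K d g) ∧ ∃ h ∈ J, phi K g = phi K h}

/-! ### The commutative (letterplace) side -/

/-- The shift of letterplace variables: `k · y(j) = y(j + k)`. -/
def shiftVar {Y : Type*} (k : ℕ) (p : Y × ℕ+) : Y × ℕ+ :=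
  (p.1, ⟨p.2 + k, Nat.add_pos_left p.2.2 k⟩)

/-- The action of `k ∈ ℕ` on the letterplace algebra. -/
def shift {Y : Type*} (k : ℕ) : PL K Y →ₐ[K] PL K Y := MvPolynomial.rename (shiftVar k)

/-- An ideal of `PL K Y` is an ℕ-ideal if it is stable under all shifts. -/
def IsNIdeal {Y : Type*} (I : Ideal (PL K Y)) : Prop := ∀ k, ∀ f ∈ I, shift K k f ∈ I

/-- The ℕ-ideal `⟨S⟩_ℕ` generated by a set `S`. -/
def nspan {Y : Type*} (S : Set (PL K Y)) : Ideal (PL K Y) :=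
  Ideal.span {g | ∃ k, ∃ f ∈ S, g = shift K k f}

/-- The place multidegree `∂(m)` of a monomial. -/
def placeDeg {Y : Type*} (m : (Y × ℕ+) →₀ ℕ) : ℕ+ →₀ ℕ := Finsupp.mapDomain Prod.snd m

/-- `f` is multihomogeneous of place multidegree `μ`. -/
def IsMultiHomog {Y : Type*} (μ : ℕ+ →₀ ℕ) (f : PL K Y) : Prop :=
  ∀ m ∈ f.support, placeDeg m = μ

/-- The multihomogeneous component of multidegree `μ` of `f`. -/
def mComp {Y : Type*} (μ : ℕ+ →₀ ℕ) (f : PL K Y) : PL K Y :=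
  ∑ m ∈ f.support.filter (fun m => placeDeg m = μ),
    MvPolynomial.monomial m (MvPolynomial.coeff m f)

/-- An ideal is multigraded iff it contains all multihomogeneous components of its elements. -/
def IsMultiGraded {Y : Type*} (I : Ideal (PL K Y)) : Prop := ∀ f ∈ I, ∀ μ, mComp K μ f ∈ I

/-- `ψ : P̄ → P̄`, with `ψ(x_i(j)) = x_i(j)` and `ψ(t(j)) = 1`. -/
def psi {X : Type*} : PL K (Option X) →ₐ[K] PL K (Option X) :=
  MvPolynomial.aeval (fun p => Option.elim p.1 1 (fun x => MvPolynomial.X (some x, p.2)))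

/-- The canonical embedding `P → P̄`. -/
def embP {X : Type*} : PL K X →ₐ[K] PL K (Option X) :=
  MvPolynomial.rename (fun p => (some p.1, p.2))

/-- The top multidegree `∂(f)` of `f` (componentwise max over the support). -/
def topDeg {Y : Type*} (f : PL K Y) : ℕ+ →₀ ℕ := f.support.sup placeDeg

/-- The pure-`t` monomial `∏_k t(k)^{ν_k}` with exponents `ν`. -/
def tExp {X : Type*} (ν : ℕ+ →₀ ℕ) : ((Option X) × ℕ+) →₀ ℕ :=
  Finsupp.mapDomain (fun k => ((none : Option X), k)) ν

/-- The multihomogenization `f^* = Σ_μ f_μ ∏_k t(k)^{ν_k − μ_k} ∈ P̄` of `f ∈ P`. -/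
def mhstar {X : Type*} (f : PL K X) : PL K (Option X) :=
  ∑ m ∈ f.support,
    MvPolynomial.monomial
      (Finsupp.mapDomain (fun p => ((some p.1 : Option X), p.2)) m +
        tExp (topDeg K f - placeDeg m))
      (MvPolynomial.coeff m f)

/-- Multihomogenization of an element already written in `P̄` (used for elements of `ψ(P̄) = P`). -/
def mhstarO {X : Type*} (f : PL K (Option X)) : PL K (Option X) :=
  ∑ m ∈ f.support,
    MvPolynomial.monomial (m + tExp (topDeg K f - placeDeg m)) (MvPolynomial.coeff m f)

/-- The multihomogenization `I^*` of an ℕ-ideal `I ⊆ P`: the ℕ-ideal of `P̄` generated by all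
multihomogeneous elements of `ψ⁻¹(I)` (identifying `P` with its image in `P̄`). -/
def mhstarIdeal {X : Type*} (I : Ideal (PL K X)) : Ideal (PL K (Option X)) :=
  nspan K {g | (∃ μ, IsMultiHomog K μ g) ∧ ∃ f ∈ I, psi K g = embP K f}

/-- The saturation `Sat(J) = ψ(J)^*` of a multigraded ℕ-ideal `J ⊆ P̄`. -/
def SatP {X : Type*} (J : Ideal (PL K (Option X))) : Ideal (PL K (Option X)) :=
  nspan K {g | (∃ μ, IsMultiHomog K μ g) ∧ ∃ h ∈ J, psi K g = psi K h}

/-! ### The letterplace embedding -/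

/-- Exponent vector of the letterplace monomial `y_1(n+1) y_2(n+2) ⋯` of a word. -/
def wordExpAux {Y : Type*} : ℕ → List Y → ((Y × ℕ+) →₀ ℕ)
  | _, [] => 0
  | n, y :: w => Finsupp.single (y, ⟨n + 1, n.succ_pos⟩) 1 + wordExpAux (n + 1) w

/-- The letterplace monomial `y_1(1) y_2(2) ⋯ y_d(d)` of a word `y_1 y_2 ⋯ y_d`. -/
def wordExp {Y : Type*} (w : FreeMonoid Y) : (Y × ℕ+) →₀ ℕ := wordExpAux 0 (FreeMonoid.toList w)

/-- The letterplace embedding `ι : K⟨Y⟩ → PL K Y` (a `K`-linear map). -/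
def iota {Y : Type*} (f : FA K Y) : PL K Y :=
  Finsupp.sum f.coeff fun w c => MvPolynomial.monomial (wordExp w) c

/-- The set `L` of multilinear elements of `PL K Y`: multihomogeneous elements of `V = Im ι`. -/
def Lset {Y : Type*} : Set (PL K Y) :=
  {f | f ∈ Set.range (iota K (Y := Y)) ∧ ∃ μ, IsMultiHomog K μ f}

/-- A letterplace ideal (`L`-ideal): an ℕ-ideal ℕ-generated by its multilinear elements. -/
def IsLPIdeal {Y : Type*} (J : Ideal (PL K Y)) : Prop :=
  IsNIdeal K J ∧ J = nspan K ((J : Set (PL K Y)) ∩ Lset K)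

/-- The generators `x_i(1)t(2) − t(1)x_i(2)` of `D`. -/
def Dgens (X : Type*) : Set (PL K (Option X)) :=
  {g | ∃ x : X,
    g = MvPolynomial.X ((some x : Option X), (1 : ℕ+)) *
          MvPolynomial.X ((none : Option X), (2 : ℕ+)) -
        MvPolynomial.X ((none : Option X), (1 : ℕ+)) *
          MvPolynomial.X ((some x : Option X), (2 : ℕ+))}

/-- The generators `ῑ([t, x_i]) = t(1)x_i(2) − x_i(1)t(2)` of `D`. -/
def DgensT (X : Type*) : Set (PL K (Option X)) :=
  {g | ∃ x : X,
    g = MvPolynomial.X ((none : Option X), (1 : ℕ+)) *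
          MvPolynomial.X ((some x : Option X), (2 : ℕ+)) -
        MvPolynomial.X ((some x : Option X), (1 : ℕ+)) *
          MvPolynomial.X ((none : Option X), (2 : ℕ+))}

/-- `D ⊆ P̄`: the letterplace analogue of `C`. -/
def Did (X : Type*) : Ideal (PL K (Option X)) := nspan K (Dgens K X)

/-- The product `∏_{d < k ≤ d'} t(k)`. -/
def tProd (X : Type*) (d d' : ℕ) : PL K (Option X) :=
  ∏ k ∈ Finset.range (d' - d), MvPolynomial.X ((none : Option X), ⟨d + k + 1, Nat.succ_pos _⟩)

/-- The `L`-saturation `Sat_L(J)` of a letterplace ideal `D ⊆ J ⊆ P̄`. -/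
def SatL {X : Type*} (J : Ideal (PL K (Option X))) : Ideal (PL K (Option X)) :=
  nspan K {f | f ∈ Lset K ∧ ∃ d', MvPolynomial.totalDegree f ≤ d' ∧
    tProd K X (MvPolynomial.totalDegree f) d' * f ∈ J}

/-- `J` is `L`-saturated: `t(d+1)·f ∈ J` with `f` multilinear of degree `d` implies `f ∈ J`. -/
def IsLSat {X : Type*} (J : Ideal (PL K (Option X))) : Prop :=
  ∀ f ∈ Lset K (Y := Option X),
    MvPolynomial.X ((none : Option X), ⟨MvPolynomial.totalDegree f + 1, Nat.succ_pos _⟩) * f ∈ J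
      → f ∈ J

/-! ### Monomial orderings -/

/-- The shift action on letterplace monomials. -/
def shiftMon {Y : Type*} (k : ℕ) (m : (Y × ℕ+) →₀ ℕ) : (Y × ℕ+) →₀ ℕ :=
  Finsupp.mapDomain (shiftVar k) m

/-- A monomial ordering of a (possibly infinite) commutative polynomial ring, given as a strict
order relation on exponent vectors: a well-founded strict total order with `1` minimal,
compatible with multiplication of monomials. -/
structure IsMonOrd {σ : Type*} (r : (σ →₀ ℕ) → (σ →₀ ℕ) → Prop) : Prop where
  total : ∀ m n, r m n ∨ m = n ∨ r n m
  irrefl : ∀ m, ¬ r m m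
  trans : ∀ a b c, r a b → r b c → r a c
  wf : WellFounded r
  zero_min : ∀ m, ¬ r m 0
  add_compat : ∀ m n u, r m n → r (u + m) (u + n)

/-- The ordering is compatible with the ℕ-action (an `ℕ`-ordering). -/
def IsNCompat {Y : Type*} (r : ((Y × ℕ+) →₀ ℕ) → ((Y × ℕ+) →₀ ℕ) → Prop) : Prop :=
  ∀ (k : ℕ) m n, r m n → r (shiftMon k m) (shiftMon k n)

/-- The weight of a letterplace monomial: the largest place index occurring in it
(`⊥ = -∞` for the monomial `1`). -/
def wt {Y : Type*} (m : (Y × ℕ+) →₀ ℕ) : WithBot ℕ :=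
  m.support.sup (fun p => ((p.2 : ℕ) : WithBot ℕ))

/-- A weighted ordering: smaller weight implies smaller monomial. -/
def IsWeighted {Y : Type*} (r : ((Y × ℕ+) →₀ ℕ) → ((Y × ℕ+) →₀ ℕ) → Prop) : Prop :=
  ∀ m n, wt m < wt n → r m n

/-- A monomial ordering of the free algebra `K⟨Y⟩`: a well-founded strict total order on words
compatible with two-sided multiplication. -/
structure IsWordOrd {Y : Type*} (r : FreeMonoid Y → FreeMonoid Y → Prop) : Prop where
  total : ∀ m n, r m n ∨ m = n ∨ r n m
  irrefl : ∀ m, ¬ r m m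
  trans : ∀ a b c, r a b → r b c → r a c
  wf : WellFounded r
  mul_compat : ∀ m n u v, r m n → r (u * m * v) (u * n * v)

/-- A word ordering is graded if shorter words are smaller. -/
def IsGradedWordOrd {Y : Type*} (r : FreeMonoid Y → FreeMonoid Y → Prop) : Prop :=
  ∀ m n, FreeMonoid.length m < FreeMonoid.length n → r m n

/-- The word ordering of `K⟨Y⟩` induced by a monomial ordering of `PL K Y` via `ι`. -/
def inducedWordOrd {Y : Type*} (r : ((Y × ℕ+) →₀ ℕ) → ((Y × ℕ+) →₀ ℕ) → Prop)
    (m n : FreeMonoid Y) : Prop := r (wordExp m) (wordExp n)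

/-- The factor of a letterplace monomial at place `j` (a monomial of `P(j) ≅ P(1)`). -/
def fiber {Y : Type*} (m : (Y × ℕ+) →₀ ℕ) (j : ℕ+) : Y →₀ ℕ :=
  Finsupp.comapDomain (fun y => (y, j)) m (fun _ _ _ _ h => congrArg Prod.fst h)

/-- The place `ℕ`-ordering of `PL K Y` induced by a monomial ordering `r1` of `P(1)`:
compare the factors at the highest place where the two monomials differ. -/
def placeExt {Y : Type*} (r1 : (Y →₀ ℕ) → (Y →₀ ℕ) → Prop)
    (m n : (Y × ℕ+) →₀ ℕ) : Prop :=
  ∃ j : ℕ+, r1 (fiber m j) (fiber n j) ∧ ∀ j', j < j' → fiber m j' = fiber n j'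

/-! ### Leading monomials and Gröbner bases -/

/-- `m` is the leading monomial of `f ∈ PL K Y` with respect to the ordering `r`. -/
def IsLM {Y : Type*} (r : ((Y × ℕ+) →₀ ℕ) → ((Y × ℕ+) →₀ ℕ) → Prop)
    (f : PL K Y) (m : (Y × ℕ+) →₀ ℕ) : Prop :=
  m ∈ f.support ∧ ∀ m' ∈ f.support, m' ≠ m → r m' m

/-- `LM(S)`: the ideal generated by the leading monomials of the nonzero elements of `S`. -/
def LMideal {Y : Type*} (r : ((Y × ℕ+) →₀ ℕ) → ((Y × ℕ+) →₀ ℕ) → Prop)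
    (S : Set (PL K Y)) : Ideal (PL K Y) :=
  Ideal.span {p | ∃ f ∈ S, f ≠ 0 ∧ ∃ m, IsLM K r f m ∧ p = MvPolynomial.monomial m (1 : K)}

/-- The ideal generated by `ℕ·lm(G)`. -/
def shLMideal {Y : Type*} (r : ((Y × ℕ+) →₀ ℕ) → ((Y × ℕ+) →₀ ℕ) → Prop)
    (G : Set (PL K Y)) : Ideal (PL K Y) :=
  Ideal.span {p | ∃ g ∈ G, g ≠ 0 ∧ ∃ m, IsLM K r g m ∧
    ∃ k : ℕ, p = MvPolynomial.monomial (shiftMon k m) (1 : K)}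

/-- `G ⊆ I` is a Gröbner `ℕ`-basis of the ℕ-ideal `I`: `ℕ·lm(G)` generates `LM(I)`. -/
def IsGroebnerNB {Y : Type*} (r : ((Y × ℕ+) →₀ ℕ) → ((Y × ℕ+) →₀ ℕ) → Prop)
    (I : Ideal (PL K Y)) (G : Set (PL K Y)) : Prop :=
  G ⊆ (I : Set (PL K Y)) ∧ shLMideal K r G = LMideal K r (I : Set (PL K Y))

/-- `G` is a Gröbner `L`-basis of the letterplace ideal `J`: `G ⊆ J ∩ L` and the leading monomial
of every nonzero multilinear element of `J` is divisible by a shift of some `lm(g)`, `g ∈ G`. -/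
def IsGroebnerLB {Y : Type*} (r : ((Y × ℕ+) →₀ ℕ) → ((Y × ℕ+) →₀ ℕ) → Prop)
    (J : Ideal (PL K Y)) (G : Set (PL K Y)) : Prop :=
  G ⊆ (J : Set (PL K Y)) ∩ Lset K ∧
  ∀ f ∈ (J : Set (PL K Y)) ∩ Lset K, f ≠ 0 →
    ∃ g ∈ G, ∃ (k : ℕ) (mg mf : (Y × ℕ+) →₀ ℕ),
      IsLM K r g mg ∧ IsLM K r f mf ∧ shiftMon k mg ≤ mf

/-- `w` is the leading monomial (word) of `f ∈ K⟨Y⟩` with respect to the word ordering `r'`. -/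
def IsLMF {Y : Type*} (r' : FreeMonoid Y → FreeMonoid Y → Prop)
    (f : FA K Y) (w : FreeMonoid Y) : Prop :=
  w ∈ f.coeff.support ∧ ∀ w' ∈ f.coeff.support, w' ≠ w → r' w' w

/-- `G ⊆ I` is a Gröbner basis of the two-sided ideal `I ⊆ K⟨Y⟩`: the leading word of every
nonzero `f ∈ I` has the form `u · lm(g) · v` for some nonzero `g ∈ G`. -/
def IsGroebnerBF {Y : Type*} (r' : FreeMonoid Y → FreeMonoid Y → Prop)
    (I : TwoSidedIdeal (FA K Y)) (G : Set (FA K Y)) : Prop :=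
  G ⊆ (I : Set (FA K Y)) ∧
  ∀ f ∈ I, f ≠ 0 → ∃ g ∈ G, g ≠ 0 ∧ ∃ (u v wf wg : FreeMonoid Y),
    IsLMF K r' f wf ∧ IsLMF K r' g wg ∧ wf = u * wg * v

/-! ### Normal forms -/

/-- The generators `x_i(1) x_j(1)` of `N`. -/
def Ngens (Y : Type*) : Set (PL K Y) :=
  {g | ∃ i j : Y, g = MvPolynomial.X (i, (1 : ℕ+)) * MvPolynomial.X (j, (1 : ℕ+))}

/-- A polynomial is in normal form modulo `N` iff in each of its monomials all place indices
are pairwise distinct. -/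
def NormalModN {Y : Type*} (f : PL K Y) : Prop :=
  ∀ m ∈ f.support, ∀ k : ℕ+, placeDeg m k ≤ 1

/-- A polynomial is in normal form modulo `D` iff none of its monomials is divisible by a shift
of the leading monomial of some generator `t(1)x_i(2) − x_i(1)t(2)` of `D`. -/
def NormalModD {X : Type*} (r : (((Option X) × ℕ+) →₀ ℕ) → (((Option X) × ℕ+) →₀ ℕ) → Prop)
    (f : PL K (Option X)) : Prop :=
  ∀ m ∈ f.support, ∀ g ∈ DgensT K X, ∀ mg, IsLM K r g mg → ∀ k : ℕ, ¬ shiftMon k mg ≤ m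

/-- `G` is a Gröbner `L`-basis of `J` modulo `D`: its elements are multilinear elements of `J`
in normal form modulo `D`, and together with the generators of `D` they form a
Gröbner `L`-basis of `J`. -/
def IsGroebnerLBmodD {X : Type*}
    (r : (((Option X) × ℕ+) →₀ ℕ) → (((Option X) × ℕ+) →₀ ℕ) → Prop)
    (J : Ideal (PL K (Option X))) (G : Set (PL K (Option X))) : Prop :=
  (∀ g ∈ G, g ∈ (J : Set (PL K (Option X))) ∩ Lset K ∧ NormalModD K r g) ∧
  IsGroebnerLB K r J (G ∪ DgensT K X)

/-- The commutators `[t, x_i] = t x_i − x_i t` in `F̄`. -/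
def commGens (X : Type*) : Set (FA K (Option X)) :=
  {h | ∃ x : X, h = tv K * gen K (some x) - gen K (some x) * tv K}

/-- A polynomial of `F̄` is in normal form modulo `C` iff none of its words contains the leading
word of some commutator `[t, x_i]` as a factor. -/
def NormalModC {X : Type*} (r' : FreeMonoid (Option X) → FreeMonoid (Option X) → Prop)
    (f : FA K (Option X)) : Prop :=
  ∀ w ∈ f.coeff.support, ∀ g ∈ commGens K X, ∀ wg, IsLMF K r' g wg →
    ¬ ∃ u v, w = u * wg * v

/-! ### Concrete orderings on words -/

/-- The order on the letters of `X ∪ {t}` (with `X = ℕ`): `t ≺ x_1 ≺ x_2 ≺ ⋯`. -/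
def optLt : Option ℕ → Option ℕ → Prop
  | none, some _ => True
  | some i, some j => i < j
  | _, none => False

/-- The graded right lexicographic ordering on words: first compare lengths, then compare
letter by letter from the right. -/
def grRightLex {Y : Type*} (lt : Y → Y → Prop) (dflt : Y) (m n : FreeMonoid Y) : Prop :=
  FreeMonoid.length m < FreeMonoid.length n ∨
  (FreeMonoid.length m = FreeMonoid.length n ∧
    ∃ t < FreeMonoid.length m,
      lt ((FreeMonoid.toList m).getD t dflt) ((FreeMonoid.toList n).getD t dflt) ∧
      ∀ s, t < s → (FreeMonoid.toList m).getD s dflt = (FreeMonoid.toList n).getD s dflt)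

end

/-- `η : F → Q = K[x_i(1)]`, the algebra epimorphism `x_i ↦ x_i(1)`. -/
noncomputable def eta (K : Type*) [Field K] (X : Type*) : FA K X →ₐ[K] MvPolynomial X K :=
  (MonoidAlgebra.lift K (MvPolynomial X K) (FreeMonoid X))
    (FreeMonoid.lift fun x => MvPolynomial.X x)

/-- `θ : P → Q`, the ℕ-equivariant algebra epimorphism `x_i(j) ↦ x_i(1)`. -/
noncomputable def theta (K : Type*) [Field K] (X : Type*) : PL K X →ₐ[K] MvPolynomial X K :=
  MvPolynomial.aeval (fun p => MvPolynomial.X p.1)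


/-! ### Auxiliary machinery for Statement 10 -/

noncomputable section Aux
open MvPolynomial

variable (K : Type*) [Field K] (X : Type*)

/-- `π : P̄ → P`, killing the `t(j)` and keeping `x_i(j)`. -/
def piP : PL K (Option X) →ₐ[K] PL K X :=
  MvPolynomial.aeval (fun p => Option.elim p.1 1 (fun x => MvPolynomial.X (x, p.2)))

/-- the section `Q → P`, `x_i ↦ x_i(1)`. -/
def secQ : MvPolynomial X K →ₐ[K] PL K X :=
  MvPolynomial.aeval (fun x => MvPolynomial.X (x, 1))

variable {X} {Y₀ : Type*}

lemma psi_eq_embP_piP : (psi K (X := X)) = (embP K).comp (piP K X) := by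
  apply MvPolynomial.algHom_ext
  rintro ⟨o, j⟩
  cases o <;> simp [psi, piP, embP]

lemma piP_embP (f : PL K X) : piP K X (embP K f) = f := by
  have : (piP K X).comp (embP K) = AlgHom.id K (PL K X) := by
    apply MvPolynomial.algHom_ext
    rintro ⟨x, j⟩
    simp [piP, embP]
  exact congrArg (fun g => g.toFun f) this

lemma piP_surjective : Function.Surjective (piP K X) :=
  fun f => ⟨embP K f, piP_embP K f⟩

lemma piP_shift (k : ℕ) (f : PL K (Option X)) :
    piP K X (shift K k f) = shift K k (piP K X f) := by
  have : (piP K X).comp (shift K k) = (shift K k).comp (piP K X) := by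
    apply MvPolynomial.algHom_ext
    rintro ⟨o, j⟩
    cases o <;> simp [piP, shift, shiftVar]
  exact congrArg (fun g => g.toFun f) this

lemma theta_shift (k : ℕ) (f : PL K X) : theta K X (shift K k f) = theta K X f := by
  have : (theta K X).comp (shift K k) = theta K X := by
    apply MvPolynomial.algHom_ext
    rintro ⟨x, j⟩
    simp [theta, shift, shiftVar]
  exact congrArg (fun g => g.toFun f) this

lemma theta_secQ (q : MvPolynomial X K) : theta K X (secQ K X q) = q := by
  have : (theta K X).comp (secQ K X) = AlgHom.id K _ := by
    apply MvPolynomial.algHom_ext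
    intro x
    simp [theta, secQ]
  exact congrArg (fun g => g.toFun q) this

lemma shift_zero (f : PL K X) : shift K 0 f = f := by
  have h : shiftVar (Y := X) 0 = id := by
    funext p; simp only [shiftVar, id]; exact Prod.ext rfl (Subtype.ext rfl)
  simp [shift, h]

lemma iota_zero : iota K (0 : FA K Y₀) = 0 := by simp [iota]

lemma iota_single (w : FreeMonoid Y₀) (c : K) :
    iota K (MonoidAlgebra.single w c) = MvPolynomial.monomial (wordExp w) c := by
  simp only [iota]
  exact Finsupp.sum_single_index (by simp)

lemma iota_add (f g : FA K Y₀) : iota K (f + g) = iota K f + iota K g := by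
  simp only [iota]
  exact Finsupp.sum_add_index' (fun w => by simp) (fun w c1 c2 => map_add (MvPolynomial.monomial (wordExp w)) c1 c2)

lemma theta_monomial_aux (l : List X) (n : ℕ) :
    theta K X (MvPolynomial.monomial (wordExpAux n l) (1:K)) =
      (l.map (fun y => MvPolynomial.X (R := K) y)).prod := by
  induction l generalizing n with
  | nil => simp [wordExpAux]
  | cons y l ih =>
      have h1 : (MvPolynomial.monomial (wordExpAux n (y :: l)) (1:K)) =
          MvPolynomial.X (R := K) ((y, ⟨n+1, n.succ_pos⟩) : X × ℕ+) *
            MvPolynomial.monomial (wordExpAux (n+1) l) (1:K) := by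
        rw [show (MvPolynomial.X (R := K) ((y, ⟨n+1, n.succ_pos⟩) : X × ℕ+)) =
            MvPolynomial.monomial (Finsupp.single ((y, ⟨n+1, n.succ_pos⟩) : X × ℕ+) 1) (1:K) from rfl,
          MvPolynomial.monomial_mul, one_mul]
        rfl
      rw [h1, map_mul, ih]
      simp [theta]

lemma theta_iota (f : FA K X) : theta K X (iota K f) = eta K X f := by
  induction f using MonoidAlgebra.induction_linear with
  | zero => simp [iota_zero]
  | add f g hf hg => rw [iota_add, map_add, map_add, hf, hg]
  | single w c =>
      rw [iota_single]
      have h1 : eta K X (MonoidAlgebra.single w c)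
          = c • (FreeMonoid.lift (fun x => MvPolynomial.X (R := K) x)) w := by
        simp [eta, MonoidAlgebra.lift_single]
      rw [h1, FreeMonoid.lift_apply]
      have h2 : MvPolynomial.monomial (wordExp w) c =
          MvPolynomial.C c * MvPolynomial.monomial (wordExp w) (1:K) := by
        rw [MvPolynomial.C_mul_monomial, mul_one]
      rw [h2, map_mul,
        show wordExp w = wordExpAux 0 (FreeMonoid.toList w) from rfl,
        theta_monomial_aux, MvPolynomial.smul_eq_C_mul]
      simp [theta]

lemma wordExpAux_append (l1 l2 : List Y₀) (n : ℕ) :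
    wordExpAux (Y := Y₀) n (l1 ++ l2) = wordExpAux n l1 + wordExpAux (n + l1.length) l2 := by
  induction l1 generalizing n with
  | nil => simp [wordExpAux]
  | cons y l ih =>
      show Finsupp.single _ 1 + wordExpAux (n+1) (l ++ l2) = _
      rw [ih]
      show _ = Finsupp.single _ 1 + wordExpAux (n+1) l + wordExpAux (n + (l.length + 1)) l2
      rw [show n + 1 + l.length = n + (l.length + 1) from by omega, add_assoc]

lemma toList_pow_none (k : ℕ) :
    FreeMonoid.toList ((FreeMonoid.of (none : Option X)) ^ k) = List.replicate k none := by
  induction k with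
  | zero => rfl
  | succ k ih =>
      rw [pow_succ', FreeMonoid.toList_mul, ih, FreeMonoid.toList_of]
      rfl

lemma piP_monomial_some (l : List X) (n : ℕ) (c : K) :
    piP K X (MvPolynomial.monomial (wordExpAux n (l.map some)) c) =
      MvPolynomial.monomial (wordExpAux n l) c := by
  induction l generalizing n with
  | nil => simp [wordExpAux, piP, MvPolynomial.monomial_zero', MvPolynomial.algHom_C]
  | cons y l ih =>
      have h1 : (MvPolynomial.monomial (wordExpAux n ((y :: l).map some)) c) =
          MvPolynomial.X (R := K) ((some y, ⟨n+1, n.succ_pos⟩) : Option X × ℕ+) *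
            MvPolynomial.monomial (wordExpAux (n+1) (l.map some)) c := by
        rw [show (MvPolynomial.X (R := K) ((some y, ⟨n+1, n.succ_pos⟩) : Option X × ℕ+)) =
            MvPolynomial.monomial (Finsupp.single ((some y, ⟨n+1, n.succ_pos⟩) : Option X × ℕ+) 1) (1:K) from rfl,
          MvPolynomial.monomial_mul, one_mul]
        rfl
      have h2 : (MvPolynomial.monomial (wordExpAux n (y :: l)) c) =
          MvPolynomial.X (R := K) ((y, ⟨n+1, n.succ_pos⟩) : X × ℕ+) *
            MvPolynomial.monomial (wordExpAux (n+1) l) c := by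
        rw [show (MvPolynomial.X (R := K) ((y, ⟨n+1, n.succ_pos⟩) : X × ℕ+)) =
            MvPolynomial.monomial (Finsupp.single ((y, ⟨n+1, n.succ_pos⟩) : X × ℕ+) 1) (1:K) from rfl,
          MvPolynomial.monomial_mul, one_mul]
        rfl
      rw [h1, map_mul, ih, h2]
      congr 1
      simp [piP]

lemma piP_monomial_none (k n : ℕ) :
    piP K X (MvPolynomial.monomial (wordExpAux n (List.replicate k (none : Option X))) (1:K)) = 1 := by
  induction k generalizing n with
  | zero => simp [wordExpAux, MvPolynomial.monomial_zero']
  | succ k ih =>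
      have h1 : (MvPolynomial.monomial (wordExpAux n (List.replicate (k+1) (none : Option X))) (1:K)) =
          MvPolynomial.X (R := K) ((none, ⟨n+1, n.succ_pos⟩) : Option X × ℕ+) *
            MvPolynomial.monomial (wordExpAux (n+1) (List.replicate k (none : Option X))) (1:K) := by
        rw [show (MvPolynomial.X (R := K) ((none, ⟨n+1, n.succ_pos⟩) : Option X × ℕ+)) =
            MvPolynomial.monomial (Finsupp.single ((none, ⟨n+1, n.succ_pos⟩) : Option X × ℕ+) 1) (1:K) from rfl,
          MvPolynomial.monomial_mul, one_mul]
        rfl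
      rw [h1, map_mul, ih]
      simp [piP]

lemma piP_iota_word (w : FreeMonoid X) (k : ℕ) (c : K) :
    piP K X (MvPolynomial.monomial
        (wordExp (embWord w * (FreeMonoid.of (none : Option X)) ^ k)) c) =
      MvPolynomial.monomial (wordExp w) c := by
  have hsplit : wordExp (embWord w * (FreeMonoid.of (none : Option X)) ^ k) =
      wordExpAux 0 ((FreeMonoid.toList w).map some) +
        wordExpAux (0 + ((FreeMonoid.toList w).map some).length)
          (List.replicate k (none : Option X)) := by
    rw [wordExp, FreeMonoid.toList_mul, wordExpAux_append,
      show FreeMonoid.toList (embWord w) = (FreeMonoid.toList w).map some from rfl,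
      toList_pow_none]
  rw [hsplit]
  have hm : (MvPolynomial.monomial (wordExpAux 0 ((FreeMonoid.toList w).map some) +
        wordExpAux (0 + ((FreeMonoid.toList w).map some).length)
          (List.replicate k (none : Option X))) c)
      = MvPolynomial.monomial (wordExpAux 0 ((FreeMonoid.toList w).map some)) c *
        MvPolynomial.monomial (wordExpAux (0 + ((FreeMonoid.toList w).map some).length)
          (List.replicate k (none : Option X))) (1:K) := by
    rw [MvPolynomial.monomial_mul, mul_one]
  rw [hm, map_mul, piP_monomial_some, piP_monomial_none, mul_one, wordExp]

lemma piP_iota_hstar (f : FA K X) : piP K X (iota K (hstar K f)) = iota K f := by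
  rw [hstar]
  have hsum : ∀ (s : Finset (FreeMonoid X)) (g : FreeMonoid X → K),
      iota K (∑ w ∈ s, MonoidAlgebra.single
        (embWord w * (FreeMonoid.of (none : Option X)) ^ (degF K f - FreeMonoid.length w)) (g w))
      = ∑ w ∈ s, MvPolynomial.monomial
          (wordExp (embWord w * (FreeMonoid.of (none : Option X)) ^ (degF K f - FreeMonoid.length w))) (g w) := by
    intro s g
    classical
    induction s using Finset.induction with
    | empty => simp [iota_zero]
    | insert _ _ hx ih =>
        rw [Finset.sum_insert hx, Finset.sum_insert hx, iota_add, iota_single, ih]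
  rw [hsum]
  rw [map_sum]
  have : ∀ w ∈ f.coeff.support, piP K X (MvPolynomial.monomial
        (wordExp (embWord w * (FreeMonoid.of (none : Option X)) ^ (degF K f - FreeMonoid.length w))) (f.coeff w))
      = MvPolynomial.monomial (wordExp w) (f.coeff w) := fun w _ => piP_iota_word K w _ _
  rw [Finset.sum_congr rfl this]
  -- iota f as a sum over support
  rw [iota]
  rfl

variable (X) in
/-- Generators of the kernel ideal `E = ker θ` (as an ℕ-orbit). -/
def EG : Set (PL K X) :=
  {g | ∃ (k : ℕ) (x : X), g = shift K k (MvPolynomial.X (x, 1) - MvPolynomial.X (x, 2))}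

lemma shift_X (k : ℕ) (x : X) (j : ℕ+) :
    shift K k (MvPolynomial.X (x, j) : PL K X) =
      MvPolynomial.X (x, ⟨j + k, Nat.add_pos_left j.2 k⟩) := by
  simp [shift, shiftVar]

lemma X_sub_X_one_mem_aux (x : X) (n : ℕ) :
    (MvPolynomial.X (x, ⟨n + 1, n.succ_pos⟩) - MvPolynomial.X (x, 1) : PL K X) ∈
      Ideal.span (EG K X) := by
  induction n with
  | zero =>
      rw [show ((⟨0 + 1, Nat.succ_pos 0⟩ : ℕ+)) = (1 : ℕ+) from rfl, sub_self]
      exact Ideal.zero_mem _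
  | succ n ih =>
      have hgen : shift K n (MvPolynomial.X (x, 1) - MvPolynomial.X (x, 2) : PL K X) ∈
          Ideal.span (EG K X) := Ideal.subset_span ⟨n, x, rfl⟩
      have hkey : shift K n (MvPolynomial.X (x, 1) - MvPolynomial.X (x, 2) : PL K X) =
          MvPolynomial.X (x, ⟨n + 1, n.succ_pos⟩) -
            MvPolynomial.X (x, ⟨n + 1 + 1, (n+1).succ_pos⟩) := by
        rw [map_sub, shift_X, shift_X]
        congr 2
        · exact Prod.ext rfl (Subtype.ext (by simp [PNat.one_coe]; omega))
        · exact Prod.ext rfl (Subtype.ext (by simp; omega))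
      have hsum : (MvPolynomial.X (x, ⟨n + 1 + 1, (n+1).succ_pos⟩) -
            MvPolynomial.X (x, 1) : PL K X) =
          (MvPolynomial.X (x, ⟨n + 1, n.succ_pos⟩) - MvPolynomial.X (x, 1)) -
            shift K n (MvPolynomial.X (x, 1) - MvPolynomial.X (x, 2) : PL K X) := by
        rw [hkey]; ring
      rw [hsum]
      exact sub_mem ih hgen

lemma X_sub_X_one_mem (x : X) (j : ℕ+) :
    (MvPolynomial.X (x, j) - MvPolynomial.X (x, 1) : PL K X) ∈ Ideal.span (EG K X) := by
  have h := X_sub_X_one_mem_aux K x (j - 1)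
  have hj : (⟨(j : ℕ) - 1 + 1, ((j:ℕ)-1).succ_pos⟩ : ℕ+) = j :=
    Subtype.ext (by show (j:ℕ)-1+1 = (j:ℕ); exact Nat.succ_pred_eq_of_pos j.pos)
  rwa [hj] at h

lemma sub_sec_mem (p : PL K X) :
    p - secQ K X (theta K X p) ∈ Ideal.span (EG K X) := by
  induction p using MvPolynomial.induction_on with
  | C a =>
      have h : secQ K X (theta K X (MvPolynomial.C a)) = MvPolynomial.C a := by
        simp [theta, secQ]
      rw [h, sub_self]
      exact Ideal.zero_mem _
  | add p q hp hq =>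
      have h : p + q - secQ K X (theta K X (p + q)) =
          (p - secQ K X (theta K X p)) + (q - secQ K X (theta K X q)) := by
        rw [map_add, map_add]; ring
      rw [h]
      exact add_mem hp hq
  | mul_X p n hp =>
      obtain ⟨x, j⟩ := n
      have h : secQ K X (theta K X (p * MvPolynomial.X (x, j))) =
          secQ K X (theta K X p) * MvPolynomial.X (x, 1) := by
        rw [map_mul, map_mul]
        congr 1
        simp [theta, secQ]
      have h2 : p * MvPolynomial.X (x, j) - secQ K X (theta K X (p * MvPolynomial.X (x, j))) =
          p * (MvPolynomial.X (x, j) - MvPolynomial.X (x, 1)) +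
            (p - secQ K X (theta K X p)) * MvPolynomial.X (x, 1) := by
        rw [h]; ring
      rw [h2]
      exact add_mem (Ideal.mul_mem_left _ _ (X_sub_X_one_mem K x j))
        (Ideal.mul_mem_right _ _ hp)

lemma piP_Dgen (x : X) :
    piP K X (MvPolynomial.X ((some x : Option X), (1 : ℕ+)) *
        MvPolynomial.X ((none : Option X), (2 : ℕ+)) -
      MvPolynomial.X ((none : Option X), (1 : ℕ+)) *
        MvPolynomial.X ((some x : Option X), (2 : ℕ+))) =
      MvPolynomial.X (x, 1) - MvPolynomial.X (x, 2) := by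
  simp [piP]

end Aux

/-- For a two-sided ideal `I ⊆ F`, `I' = θ⁻¹(η(I)) ⊆ P` and the extended
letterplace analogue `J = ⟨ῑ(f^*) : 0 ≠ f ∈ I⟩_ℕ + D ⊆ P̄`, one has `Sat(J) = (I')^*`. -/
theorem statement_10 (K : Type*) [Field K] (X : Type*) [Countable X]
    (I : TwoSidedIdeal (FA K X)) (I' : Ideal (PL K X))
    (hI' : (I' : Set (PL K X)) = theta K X ⁻¹' (eta K X '' (I : Set (FA K X))))
    (J : Ideal (PL K (Option X)))
    (hJ : J = nspan K {g | ∃ f ∈ I, f ≠ 0 ∧ g = iota K (hstar K f)} ⊔ Did K X) :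
    SatP K J = mhstarIdeal K I' := by
  classical
  have hpsi : ∀ g : PL K (Option X), psi K g = embP K (piP K X g) := by
    intro g
    rw [psi_eq_embP_piP]
    rfl
  have hsurj : Function.Surjective (piP K X).toRingHom := piP_surjective K
  -- The key computation: the image of `J` under `π` is `I'`.
  have hmap : Ideal.map (piP K X).toRingHom J = I' := by
    rw [hJ, nspan, Did, nspan, Ideal.map_sup, Ideal.map_span, Ideal.map_span]
    -- E ⊆ image of the D-part
    have hE : Ideal.span (EG K X) ≤
        Ideal.span ((piP K X).toRingHom ''
          {g | ∃ k, ∃ f ∈ Dgens K X, g = shift K k f}) := by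
      rw [Ideal.span_le]
      rintro g ⟨k, x, rfl⟩
      refine Ideal.subset_span ⟨shift K k
        (MvPolynomial.X ((some x : Option X), (1 : ℕ+)) *
            MvPolynomial.X ((none : Option X), (2 : ℕ+)) -
          MvPolynomial.X ((none : Option X), (1 : ℕ+)) *
            MvPolynomial.X ((some x : Option X), (2 : ℕ+))), ⟨k, _, ⟨x, rfl⟩, rfl⟩, ?_⟩
      show piP K X _ = _
      rw [piP_shift, piP_Dgen]
    apply le_antisymm
    · rw [sup_le_iff]
      constructor <;> rw [Ideal.span_le] <;> rintro g ⟨g0, ⟨k, f0, hf0, rfl⟩, rfl⟩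
      · obtain ⟨f, hfI, hf0ne, rfl⟩ := hf0
        show piP K X (shift K k (iota K (hstar K f))) ∈ (I' : Set (PL K X))
        rw [hI']
        simp only [Set.mem_preimage]
        rw [piP_shift, theta_shift, piP_iota_hstar, theta_iota]
        exact ⟨f, hfI, rfl⟩
      · obtain ⟨x, rfl⟩ := hf0
        show piP K X _ ∈ (I' : Set (PL K X))
        rw [hI']
        simp only [Set.mem_preimage]
        rw [piP_shift, theta_shift, piP_Dgen]
        refine ⟨0, I.zero_mem, ?_⟩
        rw [map_zero, map_sub]
        simp [theta]
    · intro p hp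
      have hp' : theta K X p ∈ (eta K X) '' (I : Set (FA K X)) := by
        have h0 : p ∈ (I' : Set (PL K X)) := hp
        rw [hI'] at h0
        exact h0
      obtain ⟨f, hfI, hθ⟩ := hp'
      have hET : Ideal.span (EG K X) ≤
          Ideal.span ((piP K X).toRingHom ''
            {g | ∃ k, ∃ f1 ∈ {g | ∃ f2 ∈ I, f2 ≠ 0 ∧ g = iota K (hstar K f2)},
              g = shift K k f1}) ⊔
          Ideal.span ((piP K X).toRingHom ''
            {g | ∃ k, ∃ f1 ∈ Dgens K X, g = shift K k f1}) := hE.trans le_sup_right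
      have h1 : p - secQ K X (theta K X p) ∈ _ := hET (sub_sec_mem K p)
      by_cases hf0 : f = 0
      · subst hf0
        rw [map_zero] at hθ
        rw [← hθ, map_zero, sub_zero] at h1
        exact h1
      · have h2 : iota K f - secQ K X (theta K X (iota K f)) ∈ _ :=
          hET (sub_sec_mem K (iota K f))
        have hι : iota K f ∈ Ideal.span ((piP K X).toRingHom ''
            {g | ∃ k, ∃ f1 ∈ {g | ∃ f2 ∈ I, f2 ≠ 0 ∧ g = iota K (hstar K f2)},
              g = shift K k f1}) := by
          refine Ideal.subset_span ⟨iota K (hstar K f),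
            ⟨0, iota K (hstar K f), ⟨f, hfI, hf0, rfl⟩, (shift_zero K _).symm⟩, ?_⟩
          exact piP_iota_hstar K f
        have hfinal : p = ((p - secQ K X (theta K X p)) + iota K f) -
            (iota K f - secQ K X (theta K X (iota K f))) := by
          rw [theta_iota, hθ]; ring
        rw [hfinal]
        exact sub_mem (add_mem h1 (le_sup_left (α := Ideal (PL K X)) hι)) h2
  -- Conclude by comparing the generating sets.
  have hsets : {g : PL K (Option X) | (∃ μ, IsMultiHomog K μ g) ∧ ∃ h ∈ J, psi K g = psi K h}
      = {g : PL K (Option X) |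
          (∃ μ, IsMultiHomog K μ g) ∧ ∃ f ∈ I', psi K g = embP K f} := by
    ext g
    constructor
    · rintro ⟨hm, h, hhJ, he⟩
      refine ⟨hm, piP K X h, ?_, ?_⟩
      · rw [← hmap]
        exact Ideal.mem_map_of_mem _ hhJ
      · rw [he, hpsi h]
    · rintro ⟨hm, f, hfI', he⟩
      rw [← hmap] at hfI'
      obtain ⟨h, hh, hph⟩ := (Ideal.mem_map_iff_of_surjective _ hsurj).mp hfI'
      exact ⟨hm, h, hh, by rw [he, ← hph]; exact (hpsi h).symm⟩
  rw [SatP, mhstarIdeal, hsets]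
end

section
/- Let ≺ be a weighted monomial ℕ-ordering of P, and define a total order ≺' on the words Mon(F) by m ≺' n if and only if ι(m) ≺ ι(n). Then ≺' is a graded monomial ordering of F. -/
section Aux11

variable {Y : Type*}

lemma wordExpAux_nil (n : ℕ) : wordExpAux n ([] : List Y) = 0 := rfl

lemma wordExpAux_cons (n : ℕ) (y : Y) (w : List Y) :
    wordExpAux n (y :: w) =
      Finsupp.single (y, ⟨n + 1, n.succ_pos⟩) 1 + wordExpAux (n + 1) w := rfl

lemma pnat_mk_coe (n : ℕ) (h : 0 < n) : ((⟨n, h⟩ : ℕ+) : ℕ) = n := rfl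

lemma wordExpAux_apply_of_le (w : List Y) :
    ∀ (n : ℕ) (y : Y) (j : ℕ+), (j : ℕ) ≤ n → wordExpAux n w (y, j) = 0 := by
  induction w with
  | nil => intro n y j hj; rfl
  | cons a t ih =>
    intro n y j hj
    have hne : ((a, (⟨n + 1, n.succ_pos⟩ : ℕ+)) : Y × ℕ+) ≠ (y, j) := by
      intro h
      have h2 : n + 1 = (j : ℕ) := congrArg (fun p : Y × ℕ+ => (p.2 : ℕ)) h
      omega
    rw [wordExpAux_cons, Finsupp.add_apply, Finsupp.single_eq_of_ne' hne,
      ih (n + 1) y j (by omega)]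

lemma wordExpAux_support_le (w : List Y) :
    ∀ n : ℕ, ∀ p ∈ (wordExpAux n w).support, (p.2 : ℕ) ≤ n + w.length := by
  classical
  induction w with
  | nil => intro n p hp; simp [wordExpAux_nil] at hp
  | cons a t ih =>
    intro n p hp
    rw [wordExpAux_cons] at hp
    rcases Finset.mem_union.mp (Finsupp.support_add hp) with h | h
    · have h2 := Finsupp.support_single_subset h
      simp only [Finset.mem_singleton] at h2
      subst h2
      show n + 1 ≤ n + (a :: t).length
      simp only [List.length_cons]
      omega
    · have := ih (n + 1) p h
      simp only [List.length_cons]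
      omega

lemma wordExpAux_exists_last (w : List Y) :
    ∀ (n : ℕ) (j : ℕ+), (j : ℕ) = n + w.length → w ≠ [] →
      ∃ y, (y, j) ∈ (wordExpAux n w).support := by
  induction w with
  | nil => intro n j hj hw; exact absurd rfl hw
  | cons a t ih =>
    intro n j hj _
    rcases eq_or_ne t [] with rfl | ht
    · refine ⟨a, Finsupp.mem_support_iff.mpr ?_⟩
      have hpt : ((a, (⟨n + 1, n.succ_pos⟩ : ℕ+)) : Y × ℕ+) = (a, j) := by
        refine Prod.ext rfl (Subtype.ext ?_)
        show n + 1 = (j : ℕ)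
        simp only [List.length_cons, List.length_nil] at hj
        omega
      rw [wordExpAux_cons, wordExpAux_nil, add_zero, ← hpt]
      simp
    · obtain ⟨y, hy⟩ := ih (n + 1) j (by simp only [List.length_cons] at hj ⊢; omega) ht
      refine ⟨y, Finsupp.mem_support_iff.mpr ?_⟩
      have h0 : wordExpAux (n + 1) t (y, j) ≠ 0 := Finsupp.mem_support_iff.mp hy
      have hlt : 1 ≤ t.length := List.length_pos_iff.mpr ht
      have hne : ((a, (⟨n + 1, n.succ_pos⟩ : ℕ+)) : Y × ℕ+) ≠ (y, j) := by
        intro h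
        have h2 : n + 1 = (j : ℕ) := congrArg (fun p : Y × ℕ+ => (p.2 : ℕ)) h
        simp only [List.length_cons] at hj
        omega
      rw [wordExpAux_cons, Finsupp.add_apply, Finsupp.single_eq_of_ne' hne, zero_add]
      exact h0

lemma wordExpAux_injective (w1 : List Y) :
    ∀ (w2 : List Y) (n : ℕ), wordExpAux n w1 = wordExpAux n w2 → w1 = w2 := by
  induction w1 with
  | nil =>
    intro w2 n h
    cases w2 with
    | nil => rfl
    | cons b t =>
      exfalso
      have hz := wordExpAux_apply_of_le t (n + 1) b ⟨n + 1, n.succ_pos⟩ (Nat.le_refl _)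
      have h1 : wordExpAux n ([] : List Y) (b, (⟨n + 1, n.succ_pos⟩ : ℕ+)) =
          wordExpAux n (b :: t) (b, (⟨n + 1, n.succ_pos⟩ : ℕ+)) := by rw [h]
      rw [wordExpAux_nil, wordExpAux_cons, Finsupp.add_apply, hz,
        Finsupp.single_eq_same] at h1
      simp at h1
  | cons a t1 ih =>
    intro w2 n h
    cases w2 with
    | nil =>
      exfalso
      have hz := wordExpAux_apply_of_le t1 (n + 1) a ⟨n + 1, n.succ_pos⟩ (Nat.le_refl _)
      have h1 : wordExpAux n (a :: t1) (a, (⟨n + 1, n.succ_pos⟩ : ℕ+)) =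
          wordExpAux n ([] : List Y) (a, (⟨n + 1, n.succ_pos⟩ : ℕ+)) := by rw [h]
      rw [wordExpAux_nil, wordExpAux_cons, Finsupp.add_apply, hz,
        Finsupp.single_eq_same] at h1
      simp at h1
    | cons b t2 =>
      have hba : b = a := by
        by_contra hba
        have hz1 := wordExpAux_apply_of_le t1 (n + 1) a ⟨n + 1, n.succ_pos⟩ (Nat.le_refl _)
        have hz2 := wordExpAux_apply_of_le t2 (n + 1) a ⟨n + 1, n.succ_pos⟩ (Nat.le_refl _)
        have hne : ((b, (⟨n + 1, n.succ_pos⟩ : ℕ+)) : Y × ℕ+) ≠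
            (a, (⟨n + 1, n.succ_pos⟩ : ℕ+)) := by
          intro h0; exact hba (congrArg Prod.fst h0)
        have h1 : wordExpAux n (a :: t1) (a, (⟨n + 1, n.succ_pos⟩ : ℕ+)) =
            wordExpAux n (b :: t2) (a, (⟨n + 1, n.succ_pos⟩ : ℕ+)) := by rw [h]
        rw [wordExpAux_cons, wordExpAux_cons, Finsupp.add_apply, Finsupp.add_apply,
          hz1, hz2, Finsupp.single_eq_same] at h1
        have h3 := Finsupp.single_eq_of_ne' (b := (1 : ℕ)) hne
        exact absurd (h1.trans (congrArg (· + 0) h3)) (by norm_num)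
      rw [hba] at h
      have htail : wordExpAux (n + 1) t1 = wordExpAux (n + 1) t2 := by
        ext p
        have h1 : wordExpAux n (a :: t1) p = wordExpAux n (a :: t2) p := by rw [h]
        rw [wordExpAux_cons, wordExpAux_cons, Finsupp.add_apply, Finsupp.add_apply] at h1
        exact Nat.add_left_cancel h1
      rw [hba, ih t2 (n + 1) htail]

lemma shiftMon_wordExpAux (k : ℕ) (w : List Y) :
    ∀ n : ℕ, shiftMon k (wordExpAux n w) = wordExpAux (n + k) w := by
  induction w with
  | nil => intro n; simp [wordExpAux_nil, shiftMon]
  | cons a t ih =>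
    intro n
    rw [wordExpAux_cons, wordExpAux_cons, shiftMon, Finsupp.mapDomain_add,
      Finsupp.mapDomain_single, ← shiftMon, ih (n + 1)]
    have h1 : shiftVar k ((a, (⟨n + 1, n.succ_pos⟩ : ℕ+)) : Y × ℕ+) =
        (a, (⟨n + k + 1, (n + k).succ_pos⟩ : ℕ+)) := by
      refine Prod.ext rfl (Subtype.ext ?_)
      show n + 1 + k = n + k + 1
      omega
    have h2 : n + 1 + k = n + k + 1 := by omega
    rw [h1, h2]
    rfl

lemma wordExpAux_append_s11 (w1 : List Y) :
    ∀ (w2 : List Y) (n : ℕ),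
      wordExpAux n (w1 ++ w2) = wordExpAux n w1 + wordExpAux (n + w1.length) w2 := by
  induction w1 with
  | nil => intro w2 n; simp [wordExpAux_nil]
  | cons a t ih =>
    intro w2 n
    show wordExpAux n (a :: (t ++ w2)) = _
    rw [wordExpAux_cons, wordExpAux_cons, ih w2 (n + 1)]
    have h2 : n + 1 + t.length = n + (a :: t).length := by
      simp only [List.length_cons]; omega
    rw [h2, add_assoc]

lemma wordExp_injective : Function.Injective (wordExp (Y := Y)) := by
  intro m n h
  exact FreeMonoid.toList.injective (wordExpAux_injective _ _ 0 h)

lemma wt_wordExp_le (w : FreeMonoid Y) :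
    wt (wordExp w) ≤ (FreeMonoid.length w : WithBot ℕ) := by
  apply Finset.sup_le
  intro p hp
  have h1 := wordExpAux_support_le (FreeMonoid.toList w) 0 p hp
  have h2 : (FreeMonoid.toList w).length = FreeMonoid.length w := rfl
  exact_mod_cast WithBot.coe_le_coe.mpr (by omega)

lemma le_wt_wordExp (w : FreeMonoid Y) (hw : FreeMonoid.toList w ≠ []) :
    (FreeMonoid.length w : WithBot ℕ) ≤ wt (wordExp w) := by
  have hpos : 0 < FreeMonoid.length w := List.length_pos_iff.mpr hw
  obtain ⟨y, hy⟩ := wordExpAux_exists_last (FreeMonoid.toList w) 0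
    ⟨FreeMonoid.length w, hpos⟩ ((Nat.zero_add _).symm) hw
  exact Finset.le_sup (f := fun p : Y × ℕ+ => ((p.2 : ℕ) : WithBot ℕ)) hy

lemma wt_lt_of_length_lt (m n : FreeMonoid Y)
    (h : FreeMonoid.length m < FreeMonoid.length n) :
    wt (wordExp m) < wt (wordExp n) := by
  have hn : FreeMonoid.toList n ≠ [] := by
    intro h0
    have h1 : (FreeMonoid.toList n).length = 0 := by rw [h0]; rfl
    have h2 : (FreeMonoid.toList n).length = FreeMonoid.length n := rfl
    omega
  calc wt (wordExp m) ≤ (FreeMonoid.length m : WithBot ℕ) := wt_wordExp_le m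
    _ < (FreeMonoid.length n : WithBot ℕ) := by exact_mod_cast h
    _ ≤ wt (wordExp n) := le_wt_wordExp n hn

lemma wordExp_mul_mul (u w v : FreeMonoid Y) :
    wordExp (u * w * v) = wordExp u +
      (shiftMon (FreeMonoid.length u + FreeMonoid.length w) (wordExp v) +
        shiftMon (FreeMonoid.length u) (wordExp w)) := by
  show wordExpAux 0 ((FreeMonoid.toList u ++ FreeMonoid.toList w) ++ FreeMonoid.toList v) = _
  rw [wordExpAux_append_s11, wordExpAux_append_s11]
  unfold wordExp
  rw [shiftMon_wordExpAux, shiftMon_wordExpAux]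
  simp only [Nat.zero_add, List.length_append]
  have h1 : (FreeMonoid.toList u).length = FreeMonoid.length u := rfl
  have h2 : (FreeMonoid.toList w).length = FreeMonoid.length w := rfl
  rw [h1, h2]
  abel

end Aux11

/-- If `≺` is a weighted monomial ℕ-ordering of `P` and `≺'` is the total
order on words defined by `m ≺' n ↔ ι(m) ≺ ι(n)`, then `≺'` is a graded monomial ordering
of the free associative algebra `F`. -/
theorem statement_11 (K : Type*) [Field K] (Y : Type*) [Countable Y]
    (r : ((Y × ℕ+) →₀ ℕ) → ((Y × ℕ+) →₀ ℕ) → Prop)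
    (hr : IsMonOrd r) (hrN : IsNCompat r) (hrW : IsWeighted r)
    (r' : FreeMonoid Y → FreeMonoid Y → Prop)
    (hr' : ∀ m n, r' m n ↔ inducedWordOrd r m n) :
    IsWordOrd r' ∧ IsGradedWordOrd r' := by
  have hgr : IsGradedWordOrd r' := by
    intro m n h
    exact (hr' m n).mpr (hrW _ _ (wt_lt_of_length_lt m n h))
  refine ⟨⟨?_, ?_, ?_, ?_, ?_⟩, hgr⟩
  · intro m n
    rcases hr.total (wordExp m) (wordExp n) with h | h | h
    · exact Or.inl ((hr' m n).mpr h)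
    · exact Or.inr (Or.inl (wordExp_injective h))
    · exact Or.inr (Or.inr ((hr' n m).mpr h))
  · intro m h
    exact hr.irrefl _ ((hr' m m).mp h)
  · intro a b c hab hbc
    exact (hr' a c).mpr (hr.trans _ _ _ ((hr' a b).mp hab) ((hr' b c).mp hbc))
  · exact Subrelation.wf (fun {x y} h => (hr' x y).mp h) (InvImage.wf wordExp hr.wf)
  · intro m n u v h
    have hmn := (hr' m n).mp h
    rcases lt_trichotomy (FreeMonoid.length m) (FreeMonoid.length n) with hl | hl | hl
    · apply hgr
      simp only [FreeMonoid.length_mul]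
      omega
    · apply (hr' _ _).mpr
      unfold inducedWordOrd at hmn ⊢
      rw [wordExp_mul_mul, wordExp_mul_mul, hl]
      exact hr.add_compat _ _ _ (hr.add_compat _ _ _ (hrN (FreeMonoid.length u) _ _ hmn))
    · exfalso
      have := hrW (wordExp n) (wordExp m) (wt_lt_of_length_lt n m hl)
      exact hr.irrefl _ (hr.trans _ _ _ hmn this)
end
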